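/- Let λ > 0, α > 0 and ε > 0 be fixed. For each N, let μ_N be the positive function on H_N satisfying the balance equations of the regenerative contact process, normalized so that μ_N(1,N) = 1, and write v_n = μ_N(1,n). Then there exist C > 0 and N₀ such that for all N ≥ N₀ and all integers n with λN/(1+2λ) + εN ≤ n ≤ N, one has | v_n / v_n^{high} − 1 | ≤ C/N, where v_n^{high} = C(N,n)·λ^{n−N}·f_{N,λ}(n) and f_{N,λ}(n) = Π_{k=n}^{N−1} [1 + 1/((1+2λ)(k+1) − λN)]. -/

import Mathlib

open Finset

/-- State space of the contact process on the star with `N` leaves: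
`{0,1} × {0,1,…,N}`. -/
def starStates (N : ℕ) : Finset (ℕ × ℕ) := ({0, 1} : Finset ℕ) ×ˢ Finset.range (N + 1)

/-- Jump rates of the contact process on the star with `N` leaves and infection rate `lam`. -/
noncomputable def starRate (lam : ℝ) (N : ℕ) (x y : ℕ × ℕ) : ℝ :=
  if x.1 = 1 ∧ y.1 = 1 ∧ y.2 = x.2 + 1 ∧ x.2 + 1 ≤ N then lam * ((N : ℝ) - x.2)
  else if x.1 = 1 ∧ y.1 = 1 ∧ x.2 = y.2 + 1 ∧ x.2 ≤ N then (x.2 : ℝ)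
  else if x.1 = 0 ∧ y.1 = 0 ∧ x.2 = y.2 + 1 ∧ x.2 ≤ N then (x.2 : ℝ)
  else if x.1 = 1 ∧ y.1 = 0 ∧ y.2 = x.2 ∧ x.2 ≤ N then 1
  else if x.1 = 0 ∧ y.1 = 1 ∧ y.2 = x.2 ∧ 1 ≤ x.2 ∧ x.2 ≤ N then lam * (x.2 : ℝ)
  else 0

/-- Jump rates of the regenerative contact process: the contact process rates plus the
supplementary rate `alpha` from `(0,0)` to `(1,0)`. -/
noncomputable def regenRate (lam alpha : ℝ) (N : ℕ) (x y : ℕ × ℕ) : ℝ :=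
  if x = (0, 0) ∧ y = (1, 0) then alpha else starRate lam N x y

/-- `μ` satisfies the balance (stationarity) equations of the regenerative process. -/
def IsBalanced (lam alpha : ℝ) (N : ℕ) (μ : ℕ × ℕ → ℝ) : Prop :=
  ∀ x ∈ starStates N,
    ∑ y ∈ starStates N, μ y * regenRate lam alpha N y x =
      μ x * ∑ y ∈ starStates N, regenRate lam alpha N x y

/-- The prefactor `f_{N,λ}(n) = ∏_{k=n}^{N-1} (1 + 1/((1+2λ)(k+1) − λN))`. -/
noncomputable def fHigh (lam : ℝ) (N n : ℕ) : ℝ :=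
  ∏ k ∈ Finset.Ico n N, (1 + 1 / ((1 + 2 * lam) * ((k : ℝ) + 1) - lam * N))

/-- `v_n^{high} = C(N,n) λ^{n−N} f_{N,λ}(n)`. -/
noncomputable def vHigh (lam : ℝ) (N n : ℕ) : ℝ :=
  (N.choose n : ℝ) * lam ^ ((n : ℤ) - (N : ℤ)) * fHigh lam N n

section Aux
variable {lam alpha : ℝ} {N : ℕ}

lemma rate00 (k m : ℕ) : regenRate lam alpha N (0,k) (0,m) =
    if k = m + 1 ∧ k ≤ N then (k : ℝ) else 0 := by
  simp only [regenRate, starRate, Prod.mk.injEq]; norm_num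

lemma rate10 (k m : ℕ) : regenRate lam alpha N (1,k) (0,m) =
    if m = k ∧ k ≤ N then 1 else 0 := by
  simp only [regenRate, starRate, Prod.mk.injEq]; norm_num

lemma rate01 (k m : ℕ) : regenRate lam alpha N (0,k) (1,m) =
    if k = 0 ∧ m = 0 then alpha
    else if m = k ∧ 1 ≤ k ∧ k ≤ N then lam * (k : ℝ) else 0 := by
  simp only [regenRate, starRate, Prod.mk.injEq]; norm_num

lemma rate11 (k m : ℕ) : regenRate lam alpha N (1,k) (1,m) =
    if m = k + 1 ∧ k + 1 ≤ N then lam * ((N : ℝ) - k)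
    else if k = m + 1 ∧ k ≤ N then (k : ℝ) else 0 := by
  simp only [regenRate, starRate, Prod.mk.injEq]; norm_num

lemma sum_star (F : ℕ × ℕ → ℝ) : ∑ y ∈ starStates N, F y =
    (∑ k ∈ Finset.range (N+1), F (0,k)) + (∑ k ∈ Finset.range (N+1), F (1,k)) := by
  rw [starStates, Finset.sum_product, Finset.sum_pair (by norm_num : (0:ℕ) ≠ 1)]

variable (μ : ℕ × ℕ → ℝ)

lemma inflow0 (m : ℕ) (hm : m ≤ N) :
    ∑ y ∈ starStates N, μ y * regenRate lam alpha N y (0,m)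
      = (if m + 1 ≤ N then ((m:ℝ)+1) * μ (0,m+1) else 0) + μ (1,m) := by
  rw [sum_star]
  have h1 : ∑ k ∈ Finset.range (N+1), μ (0,k) * regenRate lam alpha N (0,k) (0,m)
      = if m + 1 ≤ N then ((m:ℝ)+1) * μ (0,m+1) else 0 := by
    calc ∑ k ∈ Finset.range (N+1), μ (0,k) * regenRate lam alpha N (0,k) (0,m)
        = ∑ k ∈ Finset.range (N+1), (if k = m+1 then ((m:ℝ)+1) * μ (0,m+1) else 0) := by
          refine Finset.sum_congr rfl (fun k hk => ?_)
          simp only [Finset.mem_range, Nat.lt_succ_iff] at hk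
          rw [rate00]
          by_cases h : k = m + 1
          · subst h; rw [if_pos ⟨rfl, hk⟩, if_pos rfl]; push_cast; ring
          · rw [if_neg (fun hc => h hc.1), if_neg h, mul_zero]
      _ = _ := by
          rw [Finset.sum_ite_eq']
          simp only [Finset.mem_range, Nat.lt_succ_iff]
  have h2 : ∑ k ∈ Finset.range (N+1), μ (1,k) * regenRate lam alpha N (1,k) (0,m)
      = μ (1,m) := by
    calc ∑ k ∈ Finset.range (N+1), μ (1,k) * regenRate lam alpha N (1,k) (0,m)
        = ∑ k ∈ Finset.range (N+1), (if k = m then μ (1,m) else 0) := by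
          refine Finset.sum_congr rfl (fun k hk => ?_)
          simp only [Finset.mem_range, Nat.lt_succ_iff] at hk
          rw [rate10]
          by_cases h : k = m
          · subst h; rw [if_pos ⟨rfl, hk⟩, if_pos rfl, mul_one]
          · rw [if_neg (fun hc => h hc.1.symm), if_neg h, mul_zero]
      _ = _ := by
          rw [Finset.sum_ite_eq']
          simp only [Finset.mem_range, Nat.lt_succ_iff]
          rw [if_pos hm]
  rw [h1, h2]

lemma outflow0 (j : ℕ) (hm : j + 1 ≤ N) :
    ∑ y ∈ starStates N, regenRate lam alpha N (0,j+1) y = (1+lam) * ((j:ℝ)+1) := by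
  rw [sum_star]
  have h1 : ∑ k ∈ Finset.range (N+1), regenRate lam alpha N (0,j+1) (0,k)
      = ((j:ℝ)+1) := by
    calc ∑ k ∈ Finset.range (N+1), regenRate lam alpha N (0,j+1) (0,k)
        = ∑ k ∈ Finset.range (N+1), (if k = j then ((j:ℝ)+1) else 0) := by
          refine Finset.sum_congr rfl (fun k hk => ?_)
          rw [rate00]
          by_cases h : k = j
          · subst h; rw [if_pos ⟨rfl, hm⟩, if_pos rfl]; push_cast; ring
          · rw [if_neg (fun hc => h (Nat.succ_injective hc.1).symm), if_neg h]
      _ = _ := by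
          rw [Finset.sum_ite_eq']
          simp only [Finset.mem_range, Nat.lt_succ_iff]
          rw [if_pos (by omega : j ≤ N)]
  have h2 : ∑ k ∈ Finset.range (N+1), regenRate lam alpha N (0,j+1) (1,k)
      = lam * ((j:ℝ)+1) := by
    calc ∑ k ∈ Finset.range (N+1), regenRate lam alpha N (0,j+1) (1,k)
        = ∑ k ∈ Finset.range (N+1), (if k = j+1 then lam * ((j:ℝ)+1) else 0) := by
          refine Finset.sum_congr rfl (fun k hk => ?_)
          rw [rate01, if_neg (fun hc => Nat.succ_ne_zero j hc.1)]
          by_cases h : k = j + 1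
          · subst h; rw [if_pos ⟨rfl, by omega, hm⟩, if_pos rfl]; push_cast; ring
          · rw [if_neg (fun hc => h hc.1), if_neg h]
      _ = _ := by
          rw [Finset.sum_ite_eq']
          simp only [Finset.mem_range, Nat.lt_succ_iff]
          rw [if_pos hm]
  rw [h1, h2]; ring

lemma inflow1 (j : ℕ) (hm : j + 1 ≤ N) :
    ∑ y ∈ starStates N, μ y * regenRate lam alpha N y (1,j+1)
      = lam * ((N:ℝ) - j) * μ (1,j) + (if j+2 ≤ N then ((j:ℝ)+2) * μ (1,j+2) else 0)
        + lam * ((j:ℝ)+1) * μ (0,j+1) := by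
  rw [sum_star]
  have h1 : ∑ k ∈ Finset.range (N+1), μ (0,k) * regenRate lam alpha N (0,k) (1,j+1)
      = lam * ((j:ℝ)+1) * μ (0,j+1) := by
    calc ∑ k ∈ Finset.range (N+1), μ (0,k) * regenRate lam alpha N (0,k) (1,j+1)
        = ∑ k ∈ Finset.range (N+1), (if k = j+1 then lam * ((j:ℝ)+1) * μ (0,j+1) else 0) := by
          refine Finset.sum_congr rfl (fun k hk => ?_)
          rw [rate01, if_neg (fun hc => Nat.succ_ne_zero j hc.2)]
          by_cases h : k = j + 1
          · subst h; rw [if_pos ⟨rfl, by omega, hm⟩, if_pos rfl]; push_cast; ring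
          · rw [if_neg (fun hc => h hc.1.symm), if_neg h, mul_zero]
      _ = _ := by
          rw [Finset.sum_ite_eq']
          simp only [Finset.mem_range, Nat.lt_succ_iff]
          rw [if_pos hm]
  have h2 : ∑ k ∈ Finset.range (N+1), μ (1,k) * regenRate lam alpha N (1,k) (1,j+1)
      = lam * ((N:ℝ) - j) * μ (1,j) + (if j+2 ≤ N then ((j:ℝ)+2) * μ (1,j+2) else 0) := by
    calc ∑ k ∈ Finset.range (N+1), μ (1,k) * regenRate lam alpha N (1,k) (1,j+1)
        = ∑ k ∈ Finset.range (N+1), ((if k = j then lam * ((N:ℝ) - j) * μ (1,j) else 0)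
            + (if k = j+2 then (if j+2 ≤ N then ((j:ℝ)+2) * μ (1,j+2) else 0) else 0)) := by
          refine Finset.sum_congr rfl (fun k hk => ?_)
          simp only [Finset.mem_range, Nat.lt_succ_iff] at hk
          rw [rate11]
          by_cases h : k = j
          · subst h
            rw [if_pos ⟨rfl, hm⟩, if_pos rfl, if_neg (by omega : ¬ k = k + 2), add_zero]
            ring
          · by_cases h2 : k = j + 2
            · subst h2
              rw [if_neg (by rintro ⟨hc, -⟩; omega), if_pos ⟨rfl, hk⟩, if_neg h,
                if_pos rfl, if_pos hk, zero_add]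
              push_cast; ring
            · rw [if_neg (by rintro ⟨hc, -⟩; omega), if_neg (by rintro ⟨hc, -⟩; omega),
                if_neg h, if_neg h2, mul_zero, add_zero]
      _ = _ := by
          rw [Finset.sum_add_distrib, Finset.sum_ite_eq', Finset.sum_ite_eq']
          simp only [Finset.mem_range, Nat.lt_succ_iff]
          rw [if_pos (by omega : j ≤ N)]
          by_cases h : j + 2 ≤ N <;> simp [h]
  rw [h1, h2]; ring

lemma outflow1 (j : ℕ) (hm : j + 1 ≤ N) :
    ∑ y ∈ starStates N, regenRate lam alpha N (1,j+1) y
      = (if j+2 ≤ N then lam * ((N:ℝ) - (j+1)) else 0) + ((j:ℝ)+1) + 1 := by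
  rw [sum_star]
  have h1 : ∑ k ∈ Finset.range (N+1), regenRate lam alpha N (1,j+1) (0,k)
      = 1 := by
    calc ∑ k ∈ Finset.range (N+1), regenRate lam alpha N (1,j+1) (0,k)
        = ∑ k ∈ Finset.range (N+1), (if k = j+1 then (1:ℝ) else 0) := by
          refine Finset.sum_congr rfl (fun k hk => ?_)
          rw [rate10]
          by_cases h : k = j + 1
          · subst h; rw [if_pos ⟨rfl, hm⟩, if_pos rfl]
          · rw [if_neg (fun hc => h hc.1), if_neg h]
      _ = _ := by
          rw [Finset.sum_ite_eq']
          simp only [Finset.mem_range, Nat.lt_succ_iff]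
          rw [if_pos hm]
  have h2 : ∑ k ∈ Finset.range (N+1), regenRate lam alpha N (1,j+1) (1,k)
      = (if j+2 ≤ N then lam * ((N:ℝ) - (j+1)) else 0) + ((j:ℝ)+1) := by
    calc ∑ k ∈ Finset.range (N+1), regenRate lam alpha N (1,j+1) (1,k)
        = ∑ k ∈ Finset.range (N+1), ((if k = j+2 then (if j+2 ≤ N then lam * ((N:ℝ) - (j+1)) else 0) else 0)
            + (if k = j then ((j:ℝ)+1) else 0)) := by
          refine Finset.sum_congr rfl (fun k hk => ?_)
          simp only [Finset.mem_range, Nat.lt_succ_iff] at hk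
          rw [rate11]
          by_cases h : k = j + 2
          · subst h
            rw [if_pos ⟨rfl, by omega⟩, if_pos rfl, if_pos (by omega : j + 2 ≤ N),
              if_neg (by omega : ¬ j + 2 = j), add_zero]
            push_cast; ring
          · by_cases h2 : k = j
            · subst h2
              rw [if_neg (by rintro ⟨hc, -⟩; omega), if_pos ⟨rfl, hm⟩, if_neg h,
                if_pos rfl, zero_add]
              push_cast; ring
            · rw [if_neg (by rintro ⟨hc, -⟩; omega), if_neg (by rintro ⟨hc, -⟩; omega),
                if_neg h, if_neg h2, add_zero]
      _ = _ := by
          rw [Finset.sum_add_distrib, Finset.sum_ite_eq', Finset.sum_ite_eq']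
          simp only [Finset.mem_range, Nat.lt_succ_iff]
          rw [if_pos (by omega : j ≤ N)]
          by_cases h : j + 2 ≤ N <;> simp [h]
  rw [h1, h2]; ring

lemma mem_star {b n : ℕ} (hb : b ≤ 1) (hn : n ≤ N) : (b, n) ∈ starStates N := by
  simp only [starStates, Finset.mem_product, Finset.mem_insert, Finset.mem_singleton,
    Finset.mem_range]
  omega

variable {μ : ℕ × ℕ → ℝ}

lemma bal0 (hbal : IsBalanced lam alpha N μ) (j : ℕ) (hm : j + 1 ≤ N) :
    (if j+2 ≤ N then ((j:ℝ)+2) * μ (0,j+2) else 0) + μ (1,j+1)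
      = (1+lam) * ((j:ℝ)+1) * μ (0,j+1) := by
  have key := hbal (0, j+1) (mem_star (by norm_num) hm)
  rw [inflow0 μ (j+1) hm, outflow0 j hm] at key
  have e : j + 1 + 1 = j + 2 := by omega
  rw [e] at key
  push_cast at key
  by_cases hc : j + 2 ≤ N
  · simp only [if_pos hc] at key ⊢; linear_combination key
  · simp only [if_neg hc] at key ⊢; linear_combination key

lemma bal1 (hbal : IsBalanced lam alpha N μ) (j : ℕ) (hm : j + 1 ≤ N) :
    lam * ((N:ℝ) - j) * μ (1,j) + (if j+2 ≤ N then ((j:ℝ)+2) * μ (1,j+2) else 0)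
        + lam * ((j:ℝ)+1) * μ (0,j+1)
      = μ (1,j+1) * ((if j+2 ≤ N then lam * ((N:ℝ) - (j+1)) else 0) + ((j:ℝ)+1) + 1) := by
  have key := hbal (1, j+1) (mem_star (by norm_num) hm)
  rw [inflow1 μ j hm, outflow1 j hm] at key
  push_cast at key ⊢
  by_cases hc : j + 2 ≤ N
  · simp only [if_pos hc] at key ⊢; linear_combination key
  · simp only [if_neg hc] at key ⊢; linear_combination key

lemma star (hbal : IsBalanced lam alpha N μ) :
    ∀ n, n + 1 ≤ N → lam * ((N:ℝ) - n) * μ (1,n)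
      = ((n:ℝ)+1) * (μ (1,n+1) + μ (0,n+1)) := by
  have gen : ∀ d n, n + 1 + d = N →
      lam * ((N:ℝ) - n) * μ (1,n) = ((n:ℝ)+1) * (μ (1,n+1) + μ (0,n+1)) := by
    intro d
    induction d with
    | zero =>
      intro n hn
      have hm : n + 1 ≤ N := by omega
      have hb1 := bal1 hbal n hm
      have hb0 := bal0 hbal n hm
      simp only [if_neg (show ¬ n + 2 ≤ N by omega)] at hb1 hb0
      linear_combination hb1 + hb0
    | succ d ih =>
      intro n hn
      have hm : n + 1 ≤ N := by omega
      have IH := ih (n+1) (by omega)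
      have hb1 := bal1 hbal n hm
      have hb0 := bal0 hbal n hm
      simp only [if_pos (show n + 2 ≤ N by omega)] at hb1 hb0
      push_cast at IH
      have e : n + 1 + 1 = n + 2 := by omega
      rw [e] at IH
      linear_combination hb1 + hb0 + IH
  intro n hn
  exact gen (N - (n+1)) n (by omega)

lemma rtop (hbal : IsBalanced lam alpha N μ) (j : ℕ) (hj : j + 1 = N) :
    μ (1, j+1) = (1+lam) * ((j:ℝ)+1) * μ (0, j+1) := by
  have hb0 := bal0 hbal j (by omega)
  rw [if_neg (by omega : ¬ j + 2 ≤ N), zero_add] at hb0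
  exact hb0

lemma rrec (hbal : IsBalanced lam alpha N μ) (hpos : ∀ x ∈ starStates N, 0 < μ x)
    (j : ℕ) (hj : j + 2 ≤ N) :
    (1+lam) * ((j:ℝ)+1) * (μ (0,j+1) / μ (1,j+1))
      = 1 + lam * ((N:ℝ) - ((j:ℝ)+1)) *
          ((μ (0,j+2) / μ (1,j+2)) / (1 + μ (0,j+2) / μ (1,j+2))) := by
  have hv1 : 0 < μ (1,j+1) := hpos _ (mem_star le_rfl (by omega))
  have hv2 : 0 < μ (1,j+2) := hpos _ (mem_star le_rfl (by omega))
  have hw2 : 0 < μ (0,j+2) := hpos _ (mem_star (by norm_num) (by omega))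
  have hsum : 0 < μ (1,j+2) + μ (0,j+2) := by linarith
  have hst := star hbal (j+1) hj
  push_cast at hst
  have hb0 := bal0 hbal j (by omega)
  rw [if_pos hj] at hb0
  have hfrac : (μ (0,j+2) / μ (1,j+2)) / (1 + μ (0,j+2) / μ (1,j+2))
      = μ (0,j+2) / (μ (1,j+2) + μ (0,j+2)) := by
    have h1p : (0:ℝ) < 1 + μ (0,j+2) / μ (1,j+2) := by positivity
    field_simp
  rw [hfrac]
  have h2 : lam * ((N:ℝ) - ((j:ℝ)+1)) * (μ (0,j+2) / (μ (1,j+2) + μ (0,j+2)))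
      = (((j:ℝ)+2) * μ (0,j+2)) / μ (1,j+1) := by
    rw [mul_div_assoc', div_eq_div_iff hsum.ne' hv1.ne']
    linear_combination μ (0,j+2) * hst
  rw [h2]
  rw [mul_div_assoc']
  rw [div_eq_iff hv1.ne',
    one_add_mul ((((j:ℝ)+2) * μ (0,j+2)) / μ (1,j+1)) (μ (1,j+1)),
    div_mul_cancel₀ _ hv1.ne']
  linear_combination -hb0

lemma gLip (a b : ℝ) (ha : 0 ≤ a) (hb : 0 ≤ b) :
    |a/(1+a) - b/(1+b)| ≤ |a - b| := by
  have h1 : (0:ℝ) < 1 + a := by linarith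
  have h2 : (0:ℝ) < 1 + b := by linarith
  have he : a/(1+a) - b/(1+b) = (a-b)/((1+a)*(1+b)) := by
    field_simp; ring
  rw [he, abs_div, abs_of_pos (mul_pos h1 h2)]
  exact div_le_self (abs_nonneg _) (by nlinarith)

lemma sdef (lam Nr mr : ℝ) (hD : 0 < (1+2*lam)*mr - lam*Nr)
    (hD' : 0 < (1+2*lam)*(mr+1) - lam*Nr) :
    (1+lam)*mr*(1/((1+2*lam)*mr - lam*Nr))
      = 1 + lam*(Nr-mr) * ((1/((1+2*lam)*(mr+1) - lam*Nr))/(1+1/((1+2*lam)*(mr+1) - lam*Nr)))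
        + 2*lam*(1+lam)*(Nr-mr)
            /(((1+2*lam)*mr - lam*Nr)*(((1+2*lam)*mr - lam*Nr)+2+2*lam)) := by
  have h1 : (1+2*lam)*mr - lam*Nr ≠ 0 := ne_of_gt hD
  have h2 : (1+2*lam)*(mr+1) - lam*Nr ≠ 0 := ne_of_gt hD'
  have h3 : 1 + 1/((1+2*lam)*(mr+1) - lam*Nr) ≠ 0 := by positivity
  have h4 : ((1+2*lam)*mr - lam*Nr)+2+2*lam ≠ 0 := by
    have : (1+2*lam)*(mr+1) - lam*Nr + 1 = ((1+2*lam)*mr - lam*Nr)+2+2*lam := by ring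
    rw [← this]; positivity
  have h6 : (1/((1+2*lam)*(mr+1) - lam*Nr))/(1+1/((1+2*lam)*(mr+1) - lam*Nr))
      = 1/(((1+2*lam)*mr - lam*Nr)+2+2*lam) := by
    field_simp; ring
  rw [h6]
  generalize hE : (1+2*lam)*mr - lam*Nr = D at *
  have h4' : D + 2 + lam*2 ≠ 0 := by rw [mul_comm lam 2]; exact h4
  field_simp
  linear_combination (D+2+2*lam)*hE

lemma prod_abs_bound {ι : Type*} (F : Finset ι) (x : ι → ℝ) :
    |∏ i ∈ F, (1 + x i) - 1| ≤ ∏ i ∈ F, (1 + |x i|) - 1 := by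
  induction F using Finset.cons_induction with
  | empty => simp
  | cons a F ha ih =>
    rw [Finset.prod_cons, Finset.prod_cons]
    have hQ : 1 ≤ ∏ i ∈ F, (1 + |x i|) := by
      have := Finset.prod_le_prod (s := F) (f := fun _ => (1:ℝ)) (g := fun i => 1 + |x i|)
        (fun i _ => by norm_num) (fun i _ => by linarith [abs_nonneg (x i)])
      simpa using this
    have e1 : (1 + x a) * ∏ i ∈ F, (1 + x i) - 1
        = (1 + x a) * (∏ i ∈ F, (1 + x i) - 1) + x a := by ring
    rw [e1]
    calc |(1 + x a) * (∏ i ∈ F, (1 + x i) - 1) + x a|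
        ≤ |1 + x a| * |∏ i ∈ F, (1 + x i) - 1| + |x a| := by
          rw [← abs_mul]; exact abs_add_le _ _
      _ ≤ (1 + |x a|) * (∏ i ∈ F, (1 + |x i|) - 1) + |x a| := by
          have hxa : |1 + x a| ≤ 1 + |x a| := (abs_add_le 1 (x a)).trans (by simp)
          have h0 : (0:ℝ) ≤ 1 + |x a| := by linarith [abs_nonneg (x a)]
          exact add_le_add_left (mul_le_mul hxa ih (abs_nonneg _) h0) _
      _ = (1 + |x a|) * ∏ i ∈ F, (1 + |x i|) - 1 := by ring

lemma prod_one_add_le_exp {ι : Type*} (F : Finset ι) (x : ι → ℝ)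
    (hx : ∀ i ∈ F, 0 ≤ x i) :
    ∏ i ∈ F, (1 + x i) ≤ Real.exp (∑ i ∈ F, x i) := by
  rw [Real.exp_sum]
  refine Finset.prod_le_prod (fun i hi => by linarith [hx i hi]) (fun i hi => ?_)
  linarith [Real.add_one_le_exp (x i)]

lemma exp_sub_one_le (S : ℝ) (h0 : 0 ≤ S) (h1 : S ≤ 1) : Real.exp S - 1 ≤ 3 * S := by
  have h := Real.add_one_le_exp (-S)
  have h2 : Real.exp S ≤ Real.exp 1 := Real.exp_le_exp.mpr h1
  have h3 : Real.exp S * Real.exp (-S) = 1 := by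
    rw [← Real.exp_add]; simp
  have h4 : Real.exp 1 < 2.7182818286 := Real.exp_one_lt_d9
  have h5 : Real.exp S * (1 - S) ≤ 1 := by
    calc Real.exp S * (1 - S) ≤ Real.exp S * Real.exp (-S) :=
          mul_le_mul_of_nonneg_left (by linarith : 1 - S ≤ Real.exp (-S)) (Real.exp_pos S).le
      _ = 1 := h3
  nlinarith [Real.exp_pos S]

set_option maxHeartbeats 1000000 in
lemma rbound (hlam : 0 < lam) (ε : ℝ) (hε : 0 < ε)
    (hpos : ∀ x ∈ starStates N, 0 < μ x)
    (hbal : IsBalanced lam alpha N μ)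
    (hN1 : 1 ≤ ε * N) :
    ∀ d m, m + d = N → lam * N / (1+2*lam) + ε * N ≤ (m:ℝ) →
      |μ (0,m)/μ (1,m) - 1/((1+2*lam)*(m:ℝ) - lam*N)|
        ≤ (2*lam*(1+lam)/ε) / ((1+2*lam)*(m:ℝ) - lam*N)^2 := by
  have hA : (0:ℝ) < 1+2*lam := by linarith
  have hNpos : (0:ℝ) < (N:ℝ) := by nlinarith [(Nat.cast_nonneg N : (0:ℝ) ≤ N)]
  have hKpos : (0:ℝ) < 2*lam*(1+lam)/ε := by positivity
  have hDlb : ∀ m : ℕ, lam * N / (1+2*lam) + ε * N ≤ (m:ℝ) →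
      (1+2*lam)*(ε*N) ≤ (1+2*lam)*(m:ℝ) - lam*N := by
    intro m hm
    have h := mul_le_mul_of_nonneg_left hm hA.le
    have hc : (1+2*lam) * (lam * N / (1+2*lam)) = lam * N := by field_simp
    nlinarith [h, hc]
  have hmlb : ∀ m : ℕ, lam * N / (1+2*lam) + ε * N ≤ (m:ℝ) → ε * N ≤ (m:ℝ) := by
    intro m hm
    have : 0 ≤ lam * N / (1+2*lam) := by positivity
    linarith
  intro d
  induction d with
  | zero =>
    intro m hm hwin
    have hmN : m = N := by omega
    subst hmN
    have hv : 0 < μ (1,m) := hpos _ (mem_star le_rfl le_rfl)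
    have hw : 0 < μ (0,m) := hpos _ (mem_star (by norm_num) le_rfl)
    obtain ⟨j, rfl⟩ : ∃ j, m = j + 1 := by
      refine ⟨m - 1, ?_⟩
      have : (1:ℝ) ≤ (m:ℝ) := le_trans hN1 (hmlb m hwin)
      have : 1 ≤ m := by exact_mod_cast this
      omega
    have ht := rtop hbal j rfl
    have hd : (0:ℝ) < (1+2*lam)*((j+1:ℕ):ℝ) - lam*((j+1:ℕ):ℝ) := by
      push_cast; nlinarith [(Nat.cast_nonneg j : (0:ℝ) ≤ j)]
    have hx : (0:ℝ) < (1+lam)*((j:ℝ)+1)*μ (0,j+1) := by positivity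
    have he : μ (0,j+1)/μ (1,j+1) = 1/((1+2*lam)*((j+1:ℕ):ℝ) - lam*((j+1:ℕ):ℝ)) := by
      rw [ht, div_eq_div_iff hx.ne' hd.ne']
      push_cast; ring
    rw [he, sub_self, abs_zero]
    positivity
  | succ d ih =>
    intro m hm hwin
    have hm1 : (1:ℝ) ≤ (m:ℝ) := le_trans hN1 (hmlb m hwin)
    obtain ⟨j, rfl⟩ : ∃ j, m = j + 1 := by
      have : 1 ≤ m := by exact_mod_cast hm1
      exact ⟨m - 1, by omega⟩
    have hj2 : j + 2 ≤ N := by omega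
    have hwin2 : lam * N / (1+2*lam) + ε * N ≤ ((j+2:ℕ):ℝ) := by
      push_cast at hwin ⊢; linarith
    have IH := ih (j+2) (by omega) hwin2
    push_cast at hwin IH ⊢
    have e2 : (1+2*lam)*((j:ℝ)+2) - lam*(N:ℝ) = (1+2*lam)*((j:ℝ)+1+1) - lam*(N:ℝ) := by ring
    rw [e2] at IH
    -- abbreviations
    set r1 := μ (0,j+1)/μ (1,j+1) with hr1
    set r2 := μ (0,j+2)/μ (1,j+2) with hr2
    set D1 := (1+2*lam)*((j:ℝ)+1) - lam*N with hD1
    set D2 := (1+2*lam)*((j:ℝ)+1+1) - lam*N with hD2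
    set K := 2*lam*(1+lam)/ε with hK
    have hD1eps : (1+2*lam)*(ε*N) ≤ D1 := by
      have := hDlb (j+1) (by push_cast; linarith)
      push_cast at this
      rw [hD1]; linarith
    have hD1pos : 0 < D1 := lt_of_lt_of_le (by positivity) hD1eps
    have hD2pos : 0 < D2 := by
      have h12 : D2 = D1 + (1+2*lam) := by rw [hD1, hD2]; ring
      linarith
    have hmeps : ε * N ≤ (j:ℝ)+1 := by
      have := hmlb (j+1) (by push_cast; linarith)
      push_cast at this; linarith
    have hr2nn : 0 ≤ r2 := by
      have hv : 0 < μ (1,j+2) := hpos _ (mem_star le_rfl hj2)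
      have hw : 0 < μ (0,j+2) := hpos _ (mem_star (by norm_num) hj2)
      positivity
    have hs2nn : (0:ℝ) ≤ 1/D2 := by positivity
    have hrec := rrec hbal hpos j hj2
    rw [← hr2] at hrec
    have hsd := sdef lam (N:ℝ) ((j:ℝ)+1) hD1pos hD2pos
    rw [← hD1, ← hD2] at hsd
    -- step 1
    have habs : (1+lam)*((j:ℝ)+1)*(r1 - 1/D1)
        = lam*((N:ℝ)-((j:ℝ)+1))*(r2/(1+r2) - (1/D2)/(1+1/D2))
          - 2*lam*(1+lam)*((N:ℝ)-((j:ℝ)+1))/(D1*(D1+2+2*lam)) := by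
      linear_combination hrec - hsd
    have hNm : (0:ℝ) ≤ (N:ℝ)-((j:ℝ)+1) := by
      have : ((j:ℝ)+1) ≤ (N:ℝ) := by exact_mod_cast Nat.cast_le.mpr (by omega : j+1 ≤ N)
      linarith
    have hT : (0:ℝ) ≤ 2*lam*(1+lam)*((N:ℝ)-((j:ℝ)+1))/(D1*(D1+2+2*lam)) := by positivity
    have step1 : (1+lam)*((j:ℝ)+1)*|r1 - 1/D1|
        ≤ lam*((N:ℝ)-((j:ℝ)+1))*(K/D2^2)
          + 2*lam*(1+lam)*((N:ℝ)-((j:ℝ)+1))/(D1*(D1+2+2*lam)) := by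
      have e1 : (1+lam)*((j:ℝ)+1)*|r1 - 1/D1| = |(1+lam)*((j:ℝ)+1)*(r1 - 1/D1)| := by
        rw [abs_mul, abs_of_pos (by positivity : (0:ℝ) < (1+lam)*((j:ℝ)+1))]
      rw [e1, habs]
      calc |lam*((N:ℝ)-((j:ℝ)+1))*(r2/(1+r2) - (1/D2)/(1+1/D2))
              - 2*lam*(1+lam)*((N:ℝ)-((j:ℝ)+1))/(D1*(D1+2+2*lam))|
          ≤ |lam*((N:ℝ)-((j:ℝ)+1))*(r2/(1+r2) - (1/D2)/(1+1/D2))|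
            + |2*lam*(1+lam)*((N:ℝ)-((j:ℝ)+1))/(D1*(D1+2+2*lam))| := abs_sub _ _
        _ ≤ lam*((N:ℝ)-((j:ℝ)+1))*(K/D2^2)
            + 2*lam*(1+lam)*((N:ℝ)-((j:ℝ)+1))/(D1*(D1+2+2*lam)) := by
            rw [abs_of_nonneg hT, abs_mul,
              abs_of_nonneg (by positivity : (0:ℝ) ≤ lam*((N:ℝ)-((j:ℝ)+1)))]
            refine add_le_add_left (mul_le_mul_of_nonneg_left ?_ (by positivity)) _
            exact le_trans (gLip r2 (1/D2) hr2nn hs2nn) IH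
    -- step 2 : the drift inequality
    have hid : (1+lam)*((j:ℝ)+1) = lam*((N:ℝ)-((j:ℝ)+1)) + D1 := by rw [hD1]; ring
    have hD12 : D1 ≤ D2 := by
      have h12 : D2 = D1 + (1+2*lam) := by rw [hD1, hD2]; ring
      linarith
    have s2a : K/D2^2 ≤ K/D1^2 := by
      apply div_le_div_of_nonneg_left hKpos.le (by positivity)
      nlinarith [hD1pos, hD12]
    have s2b : 2*lam*(1+lam)*((N:ℝ)-((j:ℝ)+1))/(D1*(D1+2+2*lam)) ≤ D1*(K/D1^2) := by
      have hd1k : D1*(K/D1^2) = K/D1 := by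
        rw [pow_two, ← div_div, mul_comm]
        exact div_mul_cancel₀ _ hD1pos.ne'
      rw [hd1k, div_le_div_iff₀ (by positivity) hD1pos]
      have hKeN : K*(ε*(N:ℝ)) = 2*lam*(1+lam)*N := by rw [hK]; field_simp
      have hD1e : ε*(N:ℝ) ≤ D1 := by nlinarith [mul_pos hε hNpos]
      have hNmN : (N:ℝ)-((j:ℝ)+1) ≤ (N:ℝ) := by linarith
      have c0 : 2*lam*(1+lam)*((N:ℝ)-((j:ℝ)+1)) ≤ 2*lam*(1+lam)*(N:ℝ) :=
        mul_le_mul_of_nonneg_left hNmN (by positivity)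
      have c0b : K*(ε*(N:ℝ)) ≤ K*D1 := mul_le_mul_of_nonneg_left hD1e hKpos.le
      have c1 : 2*lam*(1+lam)*((N:ℝ)-((j:ℝ)+1)) ≤ K*D1 := by
        rw [hKeN] at c0b; linarith
      calc 2*lam*(1+lam)*((N:ℝ)-((j:ℝ)+1))*D1 ≤ (K*D1)*D1 :=
            mul_le_mul_of_nonneg_right c1 hD1pos.le
        _ ≤ (K*D1)*(D1+2+2*lam) :=
            mul_le_mul_of_nonneg_left (by linarith) (mul_nonneg hKpos.le hD1pos.le)
        _ = K*(D1*(D1+2+2*lam)) := by ring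
    have step2 : lam*((N:ℝ)-((j:ℝ)+1))*(K/D2^2)
          + 2*lam*(1+lam)*((N:ℝ)-((j:ℝ)+1))/(D1*(D1+2+2*lam))
        ≤ (1+lam)*((j:ℝ)+1)*(K/D1^2) := by
      rw [hid, add_mul]
      refine add_le_add ?_ s2b
      exact mul_le_mul_of_nonneg_left s2a (by positivity)
    have final := le_trans step1 step2
    have hpos1 : (0:ℝ) < (1+lam)*((j:ℝ)+1) := by positivity
    exact (mul_le_mul_iff_right₀ hpos1).mp final

set_option maxHeartbeats 1000000 in
lemma vprod (hlam : 0 < lam) (hpos : ∀ x ∈ starStates N, 0 < μ x)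
    (hbal : IsBalanced lam alpha N μ) (hnorm : μ (1,N) = 1) :
    ∀ d n, n + d = N →
      μ (1,n) = (N.choose n : ℝ) * lam ^ ((n:ℤ) - (N:ℤ))
        * ∏ k ∈ Finset.Ico n N, (1 + μ (0,k+1)/μ (1,k+1)) := by
  intro d
  induction d with
  | zero =>
    intro n hn
    have hnN : n = N := by omega
    subst hnN
    simp [hnorm]
  | succ d ih =>
    intro n hn
    have hlt : n < N := by omega
    have hn1 : n + 1 ≤ N := hlt
    have IH := ih (n+1) (by omega)
    have hst := star hbal n hn1
    have hv1 : 0 < μ (1,n+1) := hpos _ (mem_star le_rfl hn1)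
    have hcastN : (n:ℝ) + 1 ≤ (N:ℝ) := by exact_mod_cast hn1
    have hNn : (0:ℝ) < lam * ((N:ℝ) - n) := by nlinarith
    have hw : μ (1,n+1) + μ (0,n+1) = μ (1,n+1)*(1 + μ (0,n+1)/μ (1,n+1)) := by
      field_simp
    have hch : ((N.choose (n+1)):ℝ)*((n:ℝ)+1) = (N.choose n : ℝ)*((N:ℝ)-(n:ℝ)) := by
      have h := Nat.choose_succ_right_eq N n
      have hcast : ((N - n : ℕ):ℝ) = (N:ℝ) - (n:ℝ) := by
        rw [Nat.cast_sub hlt.le]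
      rw [← hcast]
      exact_mod_cast h
    have hz : lam ^ (((n+1:ℕ):ℤ) - (N:ℤ)) = lam ^ ((n:ℤ)-(N:ℤ)) * lam := by
      push_cast
      rw [show ((n:ℤ)+1-(N:ℤ)) = ((n:ℤ)-(N:ℤ))+1 by ring, zpow_add_one₀ hlam.ne']
    have hprod : ∏ k ∈ Finset.Ico n N, (1 + μ (0,k+1)/μ (1,k+1))
        = (1 + μ (0,n+1)/μ (1,n+1)) * ∏ k ∈ Finset.Ico (n+1) N, (1 + μ (0,k+1)/μ (1,k+1)) :=
      Finset.prod_eq_prod_Ico_succ_bot hlt _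
    have key : lam*((N:ℝ)-n) * μ (1,n)
        = lam*((N:ℝ)-n) * ((N.choose n : ℝ) * lam ^ ((n:ℤ)-(N:ℤ))
            * ∏ k ∈ Finset.Ico n N, (1 + μ (0,k+1)/μ (1,k+1))) := by
      calc lam*((N:ℝ)-n)*μ (1,n) = ((n:ℝ)+1)*(μ (1,n+1)+μ (0,n+1)) := hst
        _ = ((n:ℝ)+1)*μ (1,n+1)*(1 + μ (0,n+1)/μ (1,n+1)) := by rw [hw]; ring
        _ = ((n:ℝ)+1)*((N.choose (n+1):ℝ) * lam^(((n+1:ℕ):ℤ)-(N:ℤ))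
              * ∏ k ∈ Finset.Ico (n+1) N, (1 + μ (0,k+1)/μ (1,k+1)))
            *(1 + μ (0,n+1)/μ (1,n+1)) := by rw [IH]
        _ = _ := by
            rw [hprod, hz]
            linear_combination (lam * lam ^ ((n:ℤ)-(N:ℤ))
              * (∏ k ∈ Finset.Ico (n+1) N, (1 + μ (0,k+1)/μ (1,k+1)))
              * (1 + μ (0,n+1)/μ (1,n+1))) * hch
    exact mul_left_cancel₀ hNn.ne' key

lemma tele (a b : ℝ) (n N : ℕ) (hn : n ≤ N) :
    ∑ k ∈ Finset.Ico n N, (1/(a*(k:ℝ) - b) - 1/(a*((k:ℝ)+1) - b))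
      = 1/(a*(n:ℝ) - b) - 1/(a*(N:ℝ) - b) := by
  rw [Finset.sum_Ico_eq_sum_range]
  have hcongr : ∀ i ∈ Finset.range (N-n),
      (1/(a*((n+i:ℕ):ℝ) - b) - 1/(a*(((n+i:ℕ):ℝ)+1) - b))
      = (fun j : ℕ => 1/(a*((n+j:ℕ):ℝ) - b)) i
        - (fun j : ℕ => 1/(a*((n+j:ℕ):ℝ) - b)) (i+1) := by
    intro i _
    simp only []
    push_cast
    ring_nf
  rw [Finset.sum_congr rfl hcongr, Finset.sum_range_sub']
  simp only [Nat.add_zero]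
  rw [show n + (N-n) = N by omega]

set_option maxHeartbeats 2000000 in
lemma main_est (hlam : 0 < lam) (ε : ℝ) (hε : 0 < ε)
    (hpos : ∀ x ∈ starStates N, 0 < μ x)
    (hbal : IsBalanced lam alpha N μ) (hnorm : μ (1,N) = 1)
    (hN1 : 1 ≤ ε * N) (hN2 : 2*lam*(1+lam)/ε^2 ≤ (N:ℝ))
    (n : ℕ) (hn : n ≤ N)
    (hwin : lam * N / (1 + 2 * lam) + ε * N ≤ (n : ℝ)) :
    |μ (1, n) / vHigh lam N n - 1| ≤ (6*lam*(1+lam)/ε^2) / N := by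
  have hA : (0:ℝ) < 1+2*lam := by linarith
  have hNpos : (0:ℝ) < (N:ℝ) := by nlinarith [(Nat.cast_nonneg N : (0:ℝ) ≤ N)]
  set K := 2*lam*(1+lam)/ε with hK
  have hKpos : 0 < K := by rw [hK]; positivity
  have hcA : (1+2*lam) * (lam * N / (1+2*lam)) = lam * N := by field_simp
  have heN : 0 < ε * N := mul_pos hε hNpos
  have hDk : ∀ k : ℕ, (n:ℝ) ≤ k → (1+2*lam)*(ε*N) ≤ (1+2*lam)*(k:ℝ) - lam*N := by
    intro k hk
    nlinarith [mul_le_mul_of_nonneg_left (le_trans hwin hk) hA.le]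
  have hDpos : ∀ k : ℕ, (n:ℝ) ≤ k → 0 < (1+2*lam)*(k:ℝ) - lam*N := by
    intro k hk
    have := hDk k hk
    nlinarith
  have hcast_succ : ∀ k : ℕ, (1+2*lam)*((k:ℝ)+1) - lam*N
      = (1+2*lam)*(((k+1:ℕ)):ℝ) - lam*N := by
    intro k; push_cast; ring
  have hDpos1 : ∀ k : ℕ, (n:ℝ) ≤ k → 0 < (1+2*lam)*((k:ℝ)+1) - lam*N := by
    intro k hk
    rw [hcast_succ k]
    refine hDpos (k+1) ?_
    push_cast; linarith
  have hrb : ∀ k : ℕ, n ≤ k → k < N →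
      |μ (0,k+1)/μ (1,k+1) - 1/((1+2*lam)*((k:ℝ)+1) - lam*N)|
        ≤ K / ((1+2*lam)*((k:ℝ)+1) - lam*N)^2 := by
    intro k hk1 hk2
    have hkr : (n:ℝ) ≤ (k:ℝ) := by exact_mod_cast hk1
    have hwin1 : lam * N / (1+2*lam) + ε * N ≤ ((k+1:ℕ):ℝ) := by
      push_cast; linarith
    have := rbound hlam ε hε hpos hbal hN1 (N-(k+1)) (k+1) (by omega) hwin1
    push_cast at this
    exact this
  have hvp := vprod hlam hpos hbal hnorm (N-n) n (by omega)
  have hchpos : (0:ℝ) < (N.choose n : ℝ) := by exact_mod_cast Nat.choose_pos hn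
  have hzpos : (0:ℝ) < lam ^ ((n:ℤ) - (N:ℤ)) := zpow_pos hlam _
  have hratio : μ (1,n) / vHigh lam N n
      = ∏ k ∈ Finset.Ico n N, ((1 + μ (0,k+1)/μ (1,k+1))
          / (1 + 1/((1+2*lam)*((k:ℝ)+1) - lam*N))) := by
    rw [hvp, vHigh, fHigh, Finset.prod_div_distrib]
    exact mul_div_mul_left _ _ (ne_of_gt (mul_pos hchpos hzpos))
  have hfactor : ∀ k ∈ Finset.Ico n N,
      (1 + μ (0,k+1)/μ (1,k+1)) / (1 + 1/((1+2*lam)*((k:ℝ)+1) - lam*N))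
        = 1 + (μ (0,k+1)/μ (1,k+1) - 1/((1+2*lam)*((k:ℝ)+1) - lam*N))
            / (1 + 1/((1+2*lam)*((k:ℝ)+1) - lam*N)) := by
    intro k hk
    rw [Finset.mem_Ico] at hk
    have hkr : (n:ℝ) ≤ (k:ℝ) := by exact_mod_cast hk.1
    have hDp := hDpos1 k hkr
    have h1s : (0:ℝ) < 1 + 1/((1+2*lam)*((k:ℝ)+1) - lam*N) := by positivity
    have hv : 0 < μ (1,k+1) := hpos _ (mem_star le_rfl (by omega))
    field_simp
    ring
  rw [hratio, Finset.prod_congr rfl hfactor]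
  -- abbreviation for the increments
  set x : ℕ → ℝ := fun k => (μ (0,k+1)/μ (1,k+1) - 1/((1+2*lam)*((k:ℝ)+1) - lam*N))
      / (1 + 1/((1+2*lam)*((k:ℝ)+1) - lam*N)) with hx
  have hxb : ∀ k ∈ Finset.Ico n N, |x k| ≤ K / ((1+2*lam)*((k:ℝ)+1) - lam*N)^2 := by
    intro k hk
    rw [Finset.mem_Ico] at hk
    have hkr : (n:ℝ) ≤ (k:ℝ) := by exact_mod_cast hk.1
    have hDp := hDpos1 k hkr
    have h1s : (1:ℝ) ≤ 1 + 1/((1+2*lam)*((k:ℝ)+1) - lam*N) := by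
      have : (0:ℝ) < 1/((1+2*lam)*((k:ℝ)+1) - lam*N) := by positivity
      linarith
    rw [hx]
    simp only []
    rw [abs_div, abs_of_pos (by linarith : (0:ℝ) < 1 + 1/((1+2*lam)*((k:ℝ)+1) - lam*N))]
    calc _ ≤ |μ (0,k+1)/μ (1,k+1) - 1/((1+2*lam)*((k:ℝ)+1) - lam*N)| :=
          div_le_self (abs_nonneg _) h1s
      _ ≤ _ := hrb k hk.1 hk.2
  -- per-term comparison to telescoping increments
  have hterm : ∀ k ∈ Finset.Ico n N, |x k|
      ≤ (K/(1+2*lam)) * (1/((1+2*lam)*(k:ℝ) - lam*N) - 1/((1+2*lam)*((k:ℝ)+1) - lam*N)) := by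
    intro k hk
    rw [Finset.mem_Ico] at hk
    have hkr : (n:ℝ) ≤ (k:ℝ) := by exact_mod_cast hk.1
    have hD0 := hDpos k hkr
    have hD1 := hDpos1 k hkr
    have hD01 : (1+2*lam)*(k:ℝ) - lam*N ≤ (1+2*lam)*((k:ℝ)+1) - lam*N := by nlinarith
    have e1 : (K/(1+2*lam)) * (1/((1+2*lam)*(k:ℝ) - lam*N) - 1/((1+2*lam)*((k:ℝ)+1) - lam*N))
        = K / (((1+2*lam)*(k:ℝ) - lam*N) * ((1+2*lam)*((k:ℝ)+1) - lam*N)) := by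
      rw [div_sub_div _ _ hD0.ne' hD1.ne']
      field_simp
      ring
    rw [e1]
    refine le_trans (hxb k (Finset.mem_Ico.mpr hk)) ?_
    apply div_le_div_of_nonneg_left hKpos.le (by positivity)
    rw [pow_two]
    exact mul_le_mul_of_nonneg_right hD01 hD1.le
  -- total sum bound
  have hDN : (0:ℝ) < (1+2*lam)*(N:ℝ) - lam*N := by nlinarith
  have hDn := hDpos n le_rfl
  have hsum : ∑ k ∈ Finset.Ico n N, |x k| ≤ K/(ε*N) := by
    calc ∑ k ∈ Finset.Ico n N, |x k|
        ≤ ∑ k ∈ Finset.Ico n N, (K/(1+2*lam))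
            * (1/((1+2*lam)*(k:ℝ) - lam*N) - 1/((1+2*lam)*((k:ℝ)+1) - lam*N)) :=
          Finset.sum_le_sum hterm
      _ = (K/(1+2*lam)) * (1/((1+2*lam)*(n:ℝ) - lam*N) - 1/((1+2*lam)*(N:ℝ) - lam*N)) := by
          rw [← Finset.mul_sum, tele (1+2*lam) (lam*N) n N hn]
      _ ≤ (K/(1+2*lam)) * (1/((1+2*lam)*(ε*N))) := by
          refine mul_le_mul_of_nonneg_left ?_ (by positivity)
          have h1 : 1/((1+2*lam)*(n:ℝ) - lam*N) ≤ 1/((1+2*lam)*(ε*N)) :=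
            one_div_le_one_div_of_le (by positivity) (hDk n le_rfl)
          have h2 : 0 ≤ 1/((1+2*lam)*(N:ℝ) - lam*N) := by positivity
          linarith
      _ = K/((1+2*lam)*((1+2*lam)*(ε*N))) := by
          rw [div_mul_div_comm, mul_one]
      _ ≤ K/(ε*N) := by
          apply div_le_div_of_nonneg_left hKpos.le heN
          nlinarith [heN, mul_pos hε hNpos, sq_nonneg lam, mul_pos (mul_pos hlam hε) hNpos]
  have hKeq : K/(ε*N) = (2*lam*(1+lam)/ε^2)/N := by
    rw [hK]
    field_simp
  have hS1 : ∑ k ∈ Finset.Ico n N, |x k| ≤ 1 := by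
    rw [hKeq] at hsum
    refine le_trans hsum ?_
    rw [div_le_one hNpos]
    exact hN2
  have hS0 : 0 ≤ ∑ k ∈ Finset.Ico n N, |x k| :=
    Finset.sum_nonneg (fun k _ => abs_nonneg _)
  calc |∏ k ∈ Finset.Ico n N, (1 + x k) - 1|
      ≤ ∏ k ∈ Finset.Ico n N, (1 + |x k|) - 1 := prod_abs_bound _ _
    _ ≤ Real.exp (∑ k ∈ Finset.Ico n N, |x k|) - 1 := by
        have := prod_one_add_le_exp (Finset.Ico n N) (fun k => |x k|)
          (fun k _ => abs_nonneg _)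
        linarith
    _ ≤ 3 * ∑ k ∈ Finset.Ico n N, |x k| := exp_sub_one_le _ hS0 hS1
    _ ≤ 3 * (K/(ε*N)) := by linarith
    _ = (6*lam*(1+lam)/ε^2) / N := by rw [hK]; field_simp; ring
end Aux

/-- **Asymptotics of the quasi-stationary measure in the high infection regime,
linear window** (Theorem `thm:stationary asymptotic high` (1)). -/
theorem stationary_asymptotic_high_linear
    (lam alpha ε : ℝ) (hlam : 0 < lam) (halpha : 0 < alpha) (hε : 0 < ε)
    (μ : ℕ → (ℕ × ℕ) → ℝ)
    (hpos : ∀ N : ℕ, ∀ x ∈ starStates N, 0 < μ N x)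
    (hbal : ∀ N : ℕ, IsBalanced lam alpha N (μ N))
    (hnorm : ∀ N : ℕ, μ N (1, N) = 1) :
    ∃ C > (0 : ℝ), ∃ N₀ : ℕ, ∀ N ≥ N₀, ∀ n : ℕ, n ≤ N →
      lam * N / (1 + 2 * lam) + ε * N ≤ (n : ℝ) →
      |μ N (1, n) / vHigh lam N n - 1| ≤ C / N := by
  refine ⟨6*lam*(1+lam)/ε^2, by positivity,
    ⌈1/ε⌉₊ + ⌈2*lam*(1+lam)/ε^2⌉₊, ?_⟩
  intro N hN n hn hwin
  have hcN1 : ((⌈1/ε⌉₊ : ℕ) : ℝ) ≤ (N:ℝ) := by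
    exact_mod_cast le_trans (Nat.le_add_right _ _) hN
  have hcN2 : ((⌈2*lam*(1+lam)/ε^2⌉₊ : ℕ) : ℝ) ≤ (N:ℝ) := by
    exact_mod_cast le_trans (Nat.le_add_left _ _) hN
  have hN1 : 1 ≤ ε * (N:ℝ) := by
    have h := Nat.le_ceil (1/ε)
    have h2 : 1/ε ≤ (N:ℝ) := le_trans h hcN1
    calc (1:ℝ) = ε * (1/ε) := by field_simp
      _ ≤ ε * N := mul_le_mul_of_nonneg_left h2 hε.le
  have hN2 : 2*lam*(1+lam)/ε^2 ≤ (N:ℝ) :=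
    le_trans (Nat.le_ceil _) hcN2
  exact main_est hlam ε hε (hpos N) (hbal N) (hnorm N) hN1 hN2 n hn hwin
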